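/- For a Massey triple of homogeneous elements x, y, z ∈ H^*(C) (i.e. xy = 0 and yz = 0), the class of the Massey triple product θ(x,y,z) in the quotient H^*(C)/(x·H^*(C) + H^*(C)·z) is independent of the choice of sections: if (s, q) and (s′, q′) are two pairs of graded k-linear sections with associated θ and θ′, then θ′(x,y,z) − θ(x,y,z) ∈ x·H^*(C) + H^*(C)·z. -/

import Mathlib

/-- `Qmap s q x y` is the cochain `q(x,y) := q(s(x)s(y) - s(xy))`. -/
def Qmap {k C H : Type} [CommRing k] [Ring C] [Algebra k C] [Ring H] [Algebra k H]
    (s : H →ₗ[k] C) (q : C → C) (x y : H) : C :=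
  q (s x * s y - s (x * y))

/-- `Theta s q i x y z` is the expression
`Θ(x,y,z) = (-1)^{|x|} s(x) q(y,z) - q(xy,z) + q(x,yz) - q(x,y) s(z)`,
where `i = |x|` is the degree of `x`. -/
def Theta {k C H : Type} [CommRing k] [Ring C] [Algebra k C] [Ring H] [Algebra k H]
    (s : H →ₗ[k] C) (q : C → C) (i : ℕ) (x y z : H) : C :=
  ((-1 : ℤ) ^ i) • (s x * Qmap s q y z) - Qmap s q (x * y) z
    + Qmap s q x (y * z) - Qmap s q x y * s z

set_option maxHeartbeats 3000000 in
/-- For a Massey triple of homogeneous elements `x, y, z ∈ H^*(C)` (`xy = 0`,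
`yz = 0`), the class of the Massey triple product `θ(x,y,z)` in
`H^*(C)/(x H^*(C) + H^*(C) z)` does not depend on the choice of the sections. -/
theorem massey_product_independent (k : Type) [CommRing k]
    (C : Type) [Ring C] [Algebra k C]
    (𝒜 : ℕ → Submodule k C) [GradedAlgebra 𝒜]
    (d : C →ₗ[k] C)
    (hd2 : ∀ x : C, d (d x) = 0)
    (hddeg : ∀ (i : ℕ), ∀ x ∈ 𝒜 i, d x ∈ 𝒜 (i + 1))
    (hleib : ∀ (i : ℕ), ∀ x ∈ 𝒜 i, ∀ y : C,
      d (x * y) = d x * y + ((-1 : ℤ) ^ i) • (x * d y))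
    (H : Type) [Ring H] [Algebra k H]
    (ℋ : ℕ → Submodule k H) [GradedAlgebra ℋ]
    (π : C → H)
    (hπadd : ∀ x y : C, d x = 0 → d y = 0 → π (x + y) = π x + π y)
    (hπsmul : ∀ (a : k) (x : C), d x = 0 → π (a • x) = a • π x)
    (hπmul : ∀ x y : C, d x = 0 → d y = 0 → π (x * y) = π x * π y)
    (hπone : π 1 = 1)
    (hπdeg : ∀ (i : ℕ), ∀ x ∈ 𝒜 i, d x = 0 → π x ∈ ℋ i)
    (hπker : ∀ x : C, d x = 0 → (π x = 0 ↔ ∃ y : C, d y = x))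
    (hπsurj : ∀ h : H, ∃ x : C, d x = 0 ∧ π x = h)
    (s : H →ₗ[k] C)
    (hs0 : ∀ h : H, d (s h) = 0)
    (hsπ : ∀ h : H, π (s h) = h)
    (hsdeg : ∀ (i : ℕ), ∀ h ∈ ℋ i, s h ∈ 𝒜 i)
    (q : C → C)
    (hqd : ∀ x : C, (∃ y, d y = x) → d (q x) = x)
    (hqadd : ∀ x y : C, (∃ u, d u = x) → (∃ v, d v = y) → q (x + y) = q x + q y)
    (hqsmul : ∀ (a : k) (x : C), (∃ y, d y = x) → q (a • x) = a • q x)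
    (hqdeg : ∀ (i : ℕ), ∀ x : C, (∃ y, d y = x) → x ∈ 𝒜 (i + 1) → q x ∈ 𝒜 i)
    (s' : H →ₗ[k] C)
    (hs0' : ∀ h : H, d (s' h) = 0)
    (hsπ' : ∀ h : H, π (s' h) = h)
    (hsdeg' : ∀ (i : ℕ), ∀ h ∈ ℋ i, s' h ∈ 𝒜 i)
    (q' : C → C)
    (hqd' : ∀ x : C, (∃ y, d y = x) → d (q' x) = x)
    (hqadd' : ∀ x y : C, (∃ u, d u = x) → (∃ v, d v = y) → q' (x + y) = q' x + q' y)
    (hqsmul' : ∀ (a : k) (x : C), (∃ y, d y = x) → q' (a • x) = a • q' x)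
    (hqdeg' : ∀ (i : ℕ), ∀ x : C, (∃ y, d y = x) → x ∈ 𝒜 (i + 1) → q' x ∈ 𝒜 i)
    :
    ∀ (i j l : ℕ) (x y z : H), x ∈ ℋ i → y ∈ ℋ j → z ∈ ℋ l →
      x * y = 0 → y * z = 0 →
      ∃ u v : H, π (Theta s' q' i x y z) - π (Theta s q i x y z) = x * u + v * z := by
  intro i j l x y z hx hy hz hxy hyz
  have hsq : ∀ n : ℕ, ((-1:ℤ)^n) * ((-1:ℤ)^n) = 1 := fun n => by
    rw [← pow_add]; exact Even.neg_one_pow ⟨n, rfl⟩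
  have hq0 : q 0 = 0 := by
    have h := hqsmul 0 0 ⟨0, map_zero d⟩
    simpa using h
  have hq0' : q' 0 = 0 := by
    have h := hqsmul' 0 0 ⟨0, map_zero d⟩
    simpa using h
  have hπsub : ∀ u v : C, d u = 0 → d v = 0 → π (u - v) = π u - π v := by
    intro u v hu hv
    have hdv : d ((-1 : k) • v) = 0 := by rw [map_smul, hv, smul_zero]
    have h := hπadd u ((-1 : k) • v) hu hdv
    rw [hπsmul (-1 : k) v hv] at h
    simpa [sub_eq_add_neg] using h
  have hπz : ∀ (n : ℤ) (u : C), d u = 0 → π (n • u) = n • π u := by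
    intro n u hu
    rw [← Int.cast_smul_eq_zsmul k, hπsmul _ u hu, Int.cast_smul_eq_zsmul]
  have hL1 : ∀ u w : C, d w = 0 → d (u * w) = d u * w := by
    intro u w hw
    refine DirectSum.Decomposition.inductionOn 𝒜
      (motive := fun u => d (u * w) = d u * w) ?_ ?_ ?_ u
    · simp
    · intro m v
      have h := hleib m (v : C) v.2 w
      rw [hw, mul_zero, smul_zero, add_zero] at h
      exact h
    · intro u₁ u₂ h1 h2
      rw [add_mul, map_add, map_add, h1, h2, add_mul]
  have hproj0 : ∀ v : C, (DirectSum.decompose 𝒜 (d v) 0 : C) = 0 := by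
    intro v
    refine DirectSum.Decomposition.inductionOn 𝒜
      (motive := fun v => (DirectSum.decompose 𝒜 (d v) 0 : C) = 0) ?_ ?_ ?_ v
    · simp
    · intro m u
      exact DirectSum.decompose_of_mem_ne 𝒜 (hddeg m (u : C) u.2) (Nat.succ_ne_zero m)
    · intro u₁ u₂ h1 h2
      rw [map_add, DirectSum.decompose_add]
      simp [DirectSum.add_apply, h1, h2]
  have hdeg0 : ∀ w : C, w ∈ 𝒜 0 → (∃ v, d v = w) → w = 0 := by
    rintro w hw ⟨v, rfl⟩
    rw [← DirectSum.decompose_of_mem_same 𝒜 hw, hproj0 v]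
  -- exactness of products of cocycles that multiply to zero in cohomology
  have hex : ∀ u v : C, d u = 0 → d v = 0 → π u * π v = 0 → ∃ w, d w = u * v := by
    intro u v hu hv huv
    have hduv : d (u * v) = 0 := by rw [hL1 u v hv, hu, zero_mul]
    exact (hπker _ hduv).mp (by rw [hπmul u v hu hv, huv])
  have hab_ex : ∃ w, d w = s x * s y :=
    hex _ _ (hs0 x) (hs0 y) (by rw [hsπ, hsπ, hxy])
  have hbc_ex : ∃ w, d w = s y * s z :=
    hex _ _ (hs0 y) (hs0 z) (by rw [hsπ, hsπ, hyz])
  have ha'b'_ex : ∃ w, d w = s' x * s' y :=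
    hex _ _ (hs0' x) (hs0' y) (by rw [hsπ', hsπ', hxy])
  have hb'c'_ex : ∃ w, d w = s' y * s' z :=
    hex _ _ (hs0' y) (hs0' z) (by rw [hsπ', hsπ', hyz])
  -- exactness of differences of sections
  have hsec : ∀ (m : ℕ) (h : H), h ∈ ℋ m → ∃ v, d v = s' h - s h := by
    intro m h hm
    have hd0 : d (s' h - s h) = 0 := by rw [map_sub, hs0' h, hs0 h, sub_self]
    exact (hπker _ hd0).mp (by rw [hπsub _ _ (hs0' h) (hs0 h), hsπ', hsπ, sub_self])
  have hαexact : ∃ v, d v = s' x - s x := hsec i x hx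
  have hβexact : ∃ v, d v = s' y - s y := hsec j y hy
  have hγexact : ∃ v, d v = s' z - s z := hsec l z hz
  -- the homotopies α, β, γ (with graded Leibniz data for α, β)
  obtain ⟨α, hdα, hLα⟩ : ∃ α : C, d α = s' x - s x ∧
      ∀ w : C, d (α * w) = d α * w - ((-1:ℤ)^i) • (α * d w) := by
    rcases i with _ | m
    · have h0 : s' x - s x = 0 :=
        hdeg0 _ (Submodule.sub_mem _ (hsdeg' 0 x hx) (hsdeg 0 x hx)) hαexact
      refine ⟨0, by rw [map_zero, h0], ?_⟩
      intro w; simp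
    · have hmem : s' x - s x ∈ 𝒜 (m+1) :=
        Submodule.sub_mem _ (hsdeg' _ x hx) (hsdeg _ x hx)
      refine ⟨q (s' x - s x), hqd _ hαexact, ?_⟩
      intro w
      rw [pow_succ, mul_neg_one, neg_smul, sub_neg_eq_add]
      exact hleib m _ (hqdeg m _ hαexact hmem) w
  obtain ⟨β, hdβ, hLβ⟩ : ∃ β : C, d β = s' y - s y ∧
      ∀ w : C, d (β * w) = d β * w - ((-1:ℤ)^j) • (β * d w) := by
    rcases j with _ | m
    · have h0 : s' y - s y = 0 :=
        hdeg0 _ (Submodule.sub_mem _ (hsdeg' 0 y hy) (hsdeg 0 y hy)) hβexact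
      refine ⟨0, by rw [map_zero, h0], ?_⟩
      intro w; simp
    · have hmem : s' y - s y ∈ 𝒜 (m+1) :=
        Submodule.sub_mem _ (hsdeg' _ y hy) (hsdeg _ y hy)
      refine ⟨q (s' y - s y), hqd _ hβexact, ?_⟩
      intro w
      rw [pow_succ, mul_neg_one, neg_smul, sub_neg_eq_add]
      exact hleib m _ (hqdeg m _ hβexact hmem) w
  obtain ⟨γ, hdγ⟩ := hγexact
  -- Leibniz for left multiplication by the cocycles s x, s y, s' x and by d β
  have hax : ∀ w : C, d (s x * w) = ((-1:ℤ)^i) • (s x * d w) := by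
    intro w; rw [hleib i (s x) (hsdeg i x hx) w, hs0, zero_mul, zero_add]
  have hax' : ∀ w : C, d (s' x * w) = ((-1:ℤ)^i) • (s' x * d w) := by
    intro w; rw [hleib i (s' x) (hsdeg' i x hx) w, hs0', zero_mul, zero_add]
  have hby : ∀ w : C, d (s y * w) = ((-1:ℤ)^j) • (s y * d w) := by
    intro w; rw [hleib j (s y) (hsdeg j y hy) w, hs0, zero_mul, zero_add]
  have hdβy : ∀ w : C, d (d β * w) = ((-1:ℤ)^j) • (d β * d w) := by
    intro w
    have hmem : d β ∈ 𝒜 j := by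
      rw [hdβ]; exact Submodule.sub_mem _ (hsdeg' j y hy) (hsdeg j y hy)
    rw [hleib j (d β) hmem w, hd2, zero_mul, zero_add]
  -- Leibniz for left multiplication by R = q (s x * s y)
  have hLR : ∀ w : C, d (q (s x * s y) * w) =
      d (q (s x * s y)) * w - ((-1:ℤ)^i * (-1:ℤ)^j) • (q (s x * s y) * d w) := by
    have hab_mem : s x * s y ∈ 𝒜 (i + j) :=
      SetLike.mul_mem_graded (hsdeg i x hx) (hsdeg j y hy)
    rcases hn : i + j with _ | n
    · have hmem0 : s x * s y ∈ 𝒜 0 := by rwa [hn] at hab_mem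
      have h0 : s x * s y = 0 := hdeg0 _ hmem0 hab_ex
      intro w
      rw [h0, hq0]
      simp
    · intro w
      have hmem : s x * s y ∈ 𝒜 (n+1) := by rwa [hn] at hab_mem
      have he : ((-1:ℤ)^i * (-1:ℤ)^j) = (-1:ℤ)^(n+1) := by rw [← pow_add, hn]
      rw [he, pow_succ, mul_neg_one, neg_smul, sub_neg_eq_add]
      exact hleib n _ (hqdeg n _ hab_ex hmem) w
  -- normal forms of the two Theta expressions
  have hΘ : Theta s q i x y z =
      ((-1:ℤ)^i) • (s x * q (s y * s z)) - q (s x * s y) * s z := by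
    simp only [Theta, Qmap, hxy, hyz, map_zero, zero_mul, mul_zero, sub_zero, hq0,
      add_zero]
  have hΘ' : Theta s' q' i x y z =
      ((-1:ℤ)^i) • (s' x * q' (s' y * s' z)) - q' (s' x * s' y) * s' z := by
    simp only [Theta, Qmap, hxy, hyz, map_zero, zero_mul, mul_zero, sub_zero, hq0',
      add_zero]
  -- differentials of the primitives
  have hdP : d (q (s y * s z)) = s y * s z := hqd _ hbc_ex
  have hdP' : d (q' (s' y * s' z)) = s' y * s' z := hqd' _ hb'c'_ex
  have hdR : d (q (s x * s y)) = s x * s y := hqd _ hab_ex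
  have hdR' : d (q' (s' x * s' y)) = s' x * s' y := hqd' _ ha'b'_ex
  set P := q (s y * s z) with hPdef
  set P' := q' (s' y * s' z) with hP'def
  set R := q (s x * s y) with hRdef
  set R' := q' (s' x * s' y) with hR'def
  set E : C := β * s z + ((-1:ℤ)^j) • (s y * γ) + β * d γ with hE
  set F : C := α * s y + ((-1:ℤ)^i) • (s x * β) + α * d β with hF
  set g : C := P' - P - E with hgdef
  set hcoc : C := R' - R - F with hhdef
  set S : C := ((-1:ℤ)^i) • (α * (P + E)) + ((-1:ℤ)^i * (-1:ℤ)^j) • ((R + F) * γ)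
      - ((-1:ℤ)^i * (-1:ℤ)^j) • (α * (s y * γ)) - ((-1:ℤ)^j) • (s x * (β * γ))
      - ((-1:ℤ)^i * (-1:ℤ)^j) • (α * (d β * γ)) with hS
  have hP'eq : P' = P + E + g := by rw [hgdef]; abel
  have hR'eq : R' = R + F + hcoc := by rw [hhdef]; abel
  have hdE : d E = d β * s z + s y * d γ + d β * d γ := by
    simp only [hE, map_add, map_zsmul, hLβ, hby, hs0, hd2, mul_zero, smul_zero,
      sub_zero, smul_smul, hsq, one_smul]
  have hdF : d F = d α * s y + s x * d β + d α * d β := by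
    simp only [hF, map_add, map_zsmul, hLα, hax, hs0, hd2, mul_zero, smul_zero,
      sub_zero, smul_smul, hsq, one_smul]
  have hdgc : d g = 0 := by
    rw [hgdef, map_sub, map_sub, hdP', hdP, hdE, hdβ, hdγ]
    noncomm_ring
  have hdh : d hcoc = 0 := by
    rw [hhdef, map_sub, map_sub, hdR', hdR, hdF, hdα, hdβ]
    noncomm_ring
  -- the master identity
  have hMI : Theta s' q' i x y z - Theta s q i x y z
      = d S + ((-1:ℤ)^i) • (s' x * g) - hcoc * s' z := by
    rcases Nat.even_or_odd i with hi | hi <;> rcases Nat.even_or_odd j with hj | hj <;>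
    · simp only [hi.neg_one_pow, hj.neg_one_pow, one_smul, neg_smul, neg_neg, one_mul,
        mul_one, neg_mul, mul_neg] at hS hE hF hLα hLβ hLR hax hby hdβy hΘ hΘ' ⊢
      rw [hΘ', hΘ, hP'eq, hR'eq, hS, hE, hF]
      simp only [mul_assoc, add_mul, mul_add, sub_mul, mul_sub, neg_mul, mul_neg,
        map_add, map_sub, map_neg, hLα, hLβ, hLR, hax, hby, hdβy, hdP, hdR, hd2, hs0, hs0',
        mul_zero, zero_mul, add_zero, zero_add, sub_zero, neg_zero, neg_neg]
      simp only [hdα, hdβ, hdγ]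
      noncomm_ring
  -- cocycle facts for the final computation
  have hdΘ : d (Theta s q i x y z) = 0 := by
    rw [hΘ, map_sub, map_zsmul, hax P, hdP, hL1 R (s z) (hs0 z), hdR,
      smul_smul, hsq i, one_smul, mul_assoc]
    exact sub_self _
  have hdΘ' : d (Theta s' q' i x y z) = 0 := by
    rw [hΘ', map_sub, map_zsmul, hax' P', hdP', hL1 R' (s' z) (hs0' z), hdR',
      smul_smul, hsq i, one_smul, mul_assoc]
    exact sub_self _
  have hda'g : d (s' x * g) = 0 := by rw [hL1 (s' x) g hdgc, hs0', zero_mul]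
  have hdhz : d (hcoc * s' z) = 0 := by rw [hL1 hcoc (s' z) (hs0' z), hdh, zero_mul]
  have h1 : d (((-1:ℤ)^i) • (s' x * g)) = 0 := by rw [map_zsmul, hda'g, smul_zero]
  have h2 : d (d S + ((-1:ℤ)^i) • (s' x * g)) = 0 := by
    rw [map_add, hd2, h1, add_zero]
  refine ⟨((-1:ℤ)^i) • π g, -(π hcoc), ?_⟩
  calc π (Theta s' q' i x y z) - π (Theta s q i x y z)
      = π (Theta s' q' i x y z - Theta s q i x y z) := (hπsub _ _ hdΘ' hdΘ).symm
    _ = π (d S + ((-1:ℤ)^i) • (s' x * g) - hcoc * s' z) := by rw [hMI]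
    _ = π (d S + ((-1:ℤ)^i) • (s' x * g)) - π (hcoc * s' z) := hπsub _ _ h2 hdhz
    _ = π (d S) + π (((-1:ℤ)^i) • (s' x * g)) - π (hcoc * s' z) := by
        rw [hπadd _ _ (hd2 S) h1]
    _ = x * (((-1:ℤ)^i) • π g) + (-(π hcoc)) * z := by
        rw [(hπker _ (hd2 S)).mpr ⟨S, rfl⟩, hπz _ _ hda'g,
          hπmul _ _ (hs0' x) hdgc, hπmul _ _ hdh (hs0' z), hsπ' x, hsπ' z, zero_add,
          mul_smul_comm, neg_mul, ← sub_eq_add_neg]
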